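/- Let T be a symmetric operator on a Hilbert space H with dom T² dense. If T² is essentially self-adjoint on dom T², then T is essentially self-adjoint. -/

import Mathlib

open scoped InnerProductSpace
open LinearPMap

/-- Composition `S ∘ T` of partially defined linear operators, with the maximal natural
domain `{x ∈ dom T | T x ∈ dom S}`. -/
noncomputable def LinearPMap.pcomp {H : Type*} [AddCommGroup H] [Module ℂ H]
    (S T : H →ₗ.[ℂ] H) : H →ₗ.[ℂ] H :=
  S.comp (T.domRestrict (Submodule.map T.domain.subtype (Submodule.comap T.toFun S.domain)))
    (by
      rintro ⟨x, hx⟩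
      have hx2 := hx.2
      obtain ⟨⟨y, hy⟩, hy2, (hy3 : y = x)⟩ := hx.1
      subst hy3
      have : T.domRestrict _ ⟨y, hx⟩ = T ⟨y, hy⟩ := domRestrict_apply rfl
      rw [this]
      exact hy2)

section Aux

set_option linter.unusedSectionVars false

variable {H : Type*} [NormedAddCommGroup H] [InnerProductSpace ℂ H] [CompleteSpace H]

/-- Graph characterization of the adjoint of a densely defined operator. -/
lemma mem_graph_adjoint_iff {R : H →ₗ.[ℂ] H} (hd : Dense (R.domain : Set H)) {y z : H} :
    (y, z) ∈ (R†).graph ↔ ∀ x : R.domain, ⟪z, (x : H)⟫_ℂ = ⟪y, R x⟫_ℂ := by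
  rw [LinearPMap.mem_graph_iff]
  constructor
  · rintro ⟨⟨y', hy⟩, hy1, hy2⟩
    simp only at hy1; subst hy1
    intro x
    have hy2' : (R†) ⟨y', hy⟩ = z := hy2
    rw [← hy2']
    exact LinearPMap.adjoint_isFormalAdjoint hd _ x
  · intro h
    have hy : y ∈ (R†).domain := LinearPMap.mem_adjoint_domain_of_exists _ ⟨z, h⟩
    refine ⟨⟨y, hy⟩, rfl, ?_⟩
    show (R†) ⟨y, hy⟩ = z
    exact LinearPMap.adjoint_apply_eq hd ⟨y, hy⟩ h

/-- The adjoint of a densely defined operator is closed. -/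
lemma adjoint_isClosed {R : H →ₗ.[ℂ] H} (hd : Dense (R.domain : Set H)) :
    (R†).IsClosed := by
  have : ((R†).graph : Set (H × H)) =
      ⋂ x : R.domain, {p : H × H | ⟪p.2, (x : H)⟫_ℂ = ⟪p.1, R x⟫_ℂ} := by
    ext ⟨y, z⟩
    simp only [Set.mem_iInter, SetLike.mem_coe, Set.mem_setOf_eq]
    exact mem_graph_adjoint_iff hd
  rw [LinearPMap.IsClosed, this]
  exact isClosed_iInter fun x =>
    isClosed_eq (continuous_snd.inner continuous_const) (continuous_fst.inner continuous_const)

/-- A densely defined symmetric operator is closable. -/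
lemma isClosable_of_symmetric {R : H →ₗ.[ℂ] H} (hd : Dense (R.domain : Set H))
    (hs : ∀ x y : R.domain, ⟪R x, (y : H)⟫_ℂ = ⟪(x : H), R y⟫_ℂ) :
    R.IsClosable := by
  have hfa : R.IsFormalAdjoint R := hs
  exact ((_root_.adjoint_isClosed hd).isClosable).leIsClosable (hfa.le_adjoint hd)

lemma LinearPMap.congr_val {R : H →ₗ.[ℂ] H} {x y : R.domain} (h : (x : H) = (y : H)) :
    R x = R y := congrArg R.toFun (Subtype.ext h)

lemma pcomp_mem_dom₁ (T : H →ₗ.[ℂ] H) (x : (T.pcomp T).domain) : (x : H) ∈ T.domain :=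
  (Submodule.mem_inf.mp x.2).2

lemma pcomp_mem_dom₂ (T : H →ₗ.[ℂ] H) (x : (T.pcomp T).domain)
    (hx : (x : H) ∈ T.domain) : T ⟨x, hx⟩ ∈ T.domain := by
  obtain ⟨⟨y, hy⟩, hy2, (hy3 : y = (x : H))⟩ := (Submodule.mem_inf.mp x.2).1
  have : T ⟨(x : H), hx⟩ = T ⟨y, hy⟩ := LinearPMap.congr_val hy3.symm
  rw [this]
  exact hy2

lemma pcomp_apply (T : H →ₗ.[ℂ] H) (x : (T.pcomp T).domain) (hx : (x : H) ∈ T.domain)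
    (hx2 : T ⟨x, hx⟩ ∈ T.domain) : (T.pcomp T) x = T ⟨T ⟨x, hx⟩, hx2⟩ := by
  have h0 : (T.pcomp T) x = T ⟨T.domRestrict _ ⟨(x : H), x.2⟩, _⟩ := rfl
  rw [h0]
  exact LinearPMap.congr_val (LinearPMap.domRestrict_apply rfl)

variable {T : H →ₗ.[ℂ] H}

/-- No nonzero "deficiency vectors": if `⟪ξ, T x⟫ = c⟪ξ, x⟫` for all `x` in the domain,
with `c² = -1`, then `ξ = 0`. -/
lemma defect_eq_zero
    (hsymm : ∀ x y : T.domain, ⟪T x, (y : H)⟫_ℂ = ⟪(x : H), T y⟫_ℂ)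
    (hdense2 : Dense (((T.pcomp T).domain : Submodule ℂ H) : Set H))
    (hess : IsSelfAdjoint (T.pcomp T).closure)
    {c : ℂ} (hc : c ^ 2 = -1) {ξ : H}
    (hξ : ∀ x : T.domain, ⟪ξ, T x⟫_ℂ = c * ⟪ξ, (x : H)⟫_ℂ) : ξ = 0 := by
  set P := T.pcomp T with hP
  -- `P` is symmetric
  have hPsymm : ∀ x y : P.domain, ⟪P x, (y : H)⟫_ℂ = ⟪(x : H), P y⟫_ℂ := by
    intro x y
    have hx1 := pcomp_mem_dom₁ T x; have hx2 := pcomp_mem_dom₂ T x hx1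
    have hy1 := pcomp_mem_dom₁ T y; have hy2 := pcomp_mem_dom₂ T y hy1
    rw [pcomp_apply T x hx1 hx2, pcomp_apply T y hy1 hy2]
    calc ⟪T ⟨T ⟨x, hx1⟩, hx2⟩, (y : H)⟫_ℂ
        = ⟪(T ⟨x, hx1⟩ : H), T ⟨y, hy1⟩⟫_ℂ := hsymm ⟨T ⟨x, hx1⟩, hx2⟩ ⟨y, hy1⟩
      _ = ⟪(x : H), T ⟨T ⟨y, hy1⟩, hy2⟩⟫_ℂ := hsymm ⟨x, hx1⟩ ⟨T ⟨y, hy1⟩, hy2⟩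
  have hPclosable : P.IsClosable := isClosable_of_symmetric hdense2 hPsymm
  have hgraphA : ((P.closure).graph : Set (H × H)) = _root_.closure (P.graph : Set (H × H)) := by
    rw [← hPclosable.graph_closure_eq_closure_graph]
    exact (P.graph.topologicalClosure_coe).symm ▸ rfl
  -- ξ annihilates the range of `P + 1`
  have hkey : ∀ p ∈ ((P.closure).graph : Set (H × H)), ⟪ξ, p.2 + p.1⟫_ℂ = 0 := by
    have hclosed : IsClosed {p : H × H | ⟪ξ, p.2 + p.1⟫_ℂ = 0} :=
      isClosed_eq (continuous_const.inner (continuous_snd.add continuous_fst)) continuous_const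
    have hsub : (P.graph : Set (H × H)) ⊆ {p : H × H | ⟪ξ, p.2 + p.1⟫_ℂ = 0} := by
      rintro ⟨x, w⟩ hp
      rw [SetLike.mem_coe, LinearPMap.mem_graph_iff] at hp
      obtain ⟨u, hu1, hu2⟩ := hp
      have hu1' : (u : H) = x := hu1
      have hx1 := pcomp_mem_dom₁ T u; have hx2 := pcomp_mem_dom₂ T u hx1
      have hu2' : (P u : H) = w := hu2
      have hw : w = T ⟨T ⟨u, hx1⟩, hx2⟩ := by rw [← hu2']; exact (pcomp_apply T u hx1 hx2).symm
      show ⟪ξ, w + x⟫_ℂ = 0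
      rw [hw, ← hu1', inner_add_right, hξ ⟨T ⟨u, hx1⟩, hx2⟩, hξ ⟨u, hx1⟩]
      linear_combination (⟪ξ, (u : H)⟫_ℂ) * hc
    intro p hp
    rw [hgraphA] at hp
    exact closure_minimal hsub hclosed hp
  -- ξ is in the domain of the adjoint of the closure, with value -ξ
  have hle : P ≤ P.closure := P.le_closure
  have hAdense : Dense (((P.closure).domain : Submodule ℂ H) : Set H) :=
    hdense2.mono (by exact_mod_cast hle.1)
  have hmem : (ξ, -ξ) ∈ ((P.closure)†).graph := by
    rw [mem_graph_adjoint_iff hAdense]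
    intro u
    have := hkey (u, P.closure u) (P.closure.mem_graph u)
    simp only [inner_add_right] at this
    rw [inner_neg_left]
    linear_combination -this
  rw [LinearPMap.isSelfAdjoint_def.mp hess] at hmem
  -- positivity of the closure
  have hpos : ∀ p ∈ ((P.closure).graph : Set (H × H)), 0 ≤ (⟪p.2, p.1⟫_ℂ).re := by
    have hclosed : IsClosed {p : H × H | 0 ≤ (⟪p.2, p.1⟫_ℂ).re} :=
      isClosed_le continuous_const (Complex.continuous_re.comp (continuous_snd.inner continuous_fst))
    have hsub : (P.graph : Set (H × H)) ⊆ {p : H × H | 0 ≤ (⟪p.2, p.1⟫_ℂ).re} := by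
      rintro ⟨x, w⟩ hp
      rw [SetLike.mem_coe, LinearPMap.mem_graph_iff] at hp
      obtain ⟨u, hu1, hu2⟩ := hp
      have hu1' : (u : H) = x := hu1
      have hx1 := pcomp_mem_dom₁ T u; have hx2 := pcomp_mem_dom₂ T u hx1
      have hu2' : (P u : H) = w := hu2
      have hw : w = T ⟨T ⟨u, hx1⟩, hx2⟩ := by rw [← hu2']; exact (pcomp_apply T u hx1 hx2).symm
      show 0 ≤ (⟪w, x⟫_ℂ).re
      rw [hw, ← hu1']
      have : ⟪(T ⟨T ⟨u, hx1⟩, hx2⟩ : H), (u : H)⟫_ℂ = ⟪(T ⟨u, hx1⟩ : H), (T ⟨u, hx1⟩ : H)⟫_ℂ :=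
        hsymm ⟨T ⟨u, hx1⟩, hx2⟩ ⟨u, hx1⟩
      rw [this, inner_self_eq_norm_sq_to_K]
      simp [← Complex.ofReal_pow]
    intro p hp
    rw [hgraphA] at hp
    exact closure_minimal hsub hclosed hp
  have h1 : 0 ≤ (⟪-ξ, ξ⟫_ℂ).re := hpos (ξ, -ξ) hmem
  rw [inner_neg_left, inner_self_eq_norm_sq_to_K] at h1
  have h1' : (0 : ℝ) ≤ -(‖ξ‖ ^ 2) := by
    simpa [← Complex.ofReal_pow] using h1
  have : ‖ξ‖ = 0 := by nlinarith [norm_nonneg ξ]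
  simpa using this

/-- Range of `S + I` is everything, for `S` closed symmetric with no deficiency. -/
lemma surj_add_I
    (hdense : Dense (T.domain : Set H))
    (hsymm : ∀ x y : T.domain, ⟪T x, (y : H)⟫_ℂ = ⟪(x : H), T y⟫_ℂ)
    (hdense2 : Dense (((T.pcomp T).domain : Submodule ℂ H) : Set H))
    (hess : IsSelfAdjoint (T.pcomp T).closure)
    (y : H) : ∃ x : T.closure.domain, (T.closure x : H) + Complex.I • (x : H) = y := by
  set S := T.closure with hS
  have hTclosable : T.IsClosable := isClosable_of_symmetric hdense hsymm
  have hTS : T ≤ S := T.le_closure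
  have hSdense : Dense ((S.domain : Submodule ℂ H) : Set H) :=
    hdense.mono (by exact_mod_cast hTS.1)
  have hS_closed : S.IsClosed := hTclosable.closure_isClosed
  have graphS : (S.graph : Set (H × H)) = _root_.closure (T.graph : Set (H × H)) := by
    rw [← hTclosable.graph_closure_eq_closure_graph]
    exact (T.graph.topologicalClosure_coe).symm ▸ rfl
  -- mixed symmetry
  have hS1 : ∀ (x : S.domain) (v : T.domain), ⟪S x, (v : H)⟫_ℂ = ⟪(x : H), T v⟫_ℂ := by
    intro x v
    have hclosed : IsClosed {p : H × H | ⟪p.2, (v : H)⟫_ℂ = ⟪p.1, T v⟫_ℂ} :=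
      isClosed_eq (continuous_snd.inner continuous_const) (continuous_fst.inner continuous_const)
    have hsub : (T.graph : Set (H × H)) ⊆ {p : H × H | ⟪p.2, (v : H)⟫_ℂ = ⟪p.1, T v⟫_ℂ} := by
      rintro ⟨a, b⟩ hp
      rw [SetLike.mem_coe, LinearPMap.mem_graph_iff] at hp
      obtain ⟨u, hu1, hu2⟩ := hp
      have hu1' : (u : H) = a := hu1
      have hu2' : (T u : H) = b := hu2
      show ⟪b, (v : H)⟫_ℂ = ⟪a, T v⟫_ℂ
      rw [← hu1', ← hu2']
      exact hsymm u v
    have hx : ((x : H), S x) ∈ _root_.closure (T.graph : Set (H × H)) := by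
      rw [← graphS]; exact S.mem_graph x
    exact closure_minimal hsub hclosed hx
  -- symmetry of S
  have hSsymm : ∀ x v : S.domain, ⟪S x, (v : H)⟫_ℂ = ⟪(x : H), S v⟫_ℂ := by
    intro x v
    have hclosed : IsClosed {p : H × H | ⟪S x, p.1⟫_ℂ = ⟪(x : H), p.2⟫_ℂ} :=
      isClosed_eq (continuous_const.inner continuous_fst) (continuous_const.inner continuous_snd)
    have hsub : (T.graph : Set (H × H)) ⊆ {p : H × H | ⟪S x, p.1⟫_ℂ = ⟪(x : H), p.2⟫_ℂ} := by
      rintro ⟨a, b⟩ hp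
      rw [SetLike.mem_coe, LinearPMap.mem_graph_iff] at hp
      obtain ⟨u, hu1, hu2⟩ := hp
      have hu1' : (u : H) = a := hu1
      have hu2' : (T u : H) = b := hu2
      show ⟪(S x : H), a⟫_ℂ = ⟪(x : H), b⟫_ℂ
      rw [← hu1', ← hu2']
      exact hS1 x u
    have hv : ((v : H), S v) ∈ _root_.closure (T.graph : Set (H × H)) := by
      rw [← graphS]; exact S.mem_graph v
    exact closure_minimal hsub hclosed hv
  -- the range of L := S + I
  set L : S.domain →ₗ[ℂ] H := S.toFun + Complex.I • S.domain.subtype with hL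
  have hLapp : ∀ x : S.domain, L x = (S x : H) + Complex.I • (x : H) := fun x => rfl
  have hreal : ∀ x : S.domain, (⟪(S x : H), (x : H)⟫_ℂ).im = 0 := by
    intro x
    have h1 : ⟪(S x : H), (x : H)⟫_ℂ = (starRingEnd ℂ) ⟪(S x : H), (x : H)⟫_ℂ := by
      calc ⟪(S x : H), (x : H)⟫_ℂ = ⟪(x : H), (S x : H)⟫_ℂ := hSsymm x x
        _ = (starRingEnd ℂ) ⟪(S x : H), (x : H)⟫_ℂ := (inner_conj_symm _ _).symm
    have h2 := congrArg Complex.im h1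
    simp only [Complex.conj_im] at h2
    linarith
  have hnorm : ∀ x : S.domain, ‖L x‖ ^ 2 = ‖(S x : H)‖ ^ 2 + ‖(x : H)‖ ^ 2 := by
    intro x
    rw [hLapp]
    rw [@norm_add_sq ℂ]
    have h2 : RCLike.re ⟪(S x : H), Complex.I • (x : H)⟫_ℂ = 0 := by
      rw [inner_smul_right]
      simp [RCLike.re_to_complex, hreal x]
    rw [h2, norm_smul]
    simp
  have hnorm1 : ∀ x : S.domain, ‖(x : H)‖ ≤ ‖L x‖ := by
    intro x
    nlinarith [hnorm x, norm_nonneg (L x), norm_nonneg ((x : H)), norm_nonneg ((S x : H))]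
  have hnorm2 : ∀ x : S.domain, ‖(S x : H)‖ ≤ ‖L x‖ := by
    intro x
    nlinarith [hnorm x, norm_nonneg (L x), norm_nonneg ((x : H)), norm_nonneg ((S x : H))]
  set R : Submodule ℂ H := LinearMap.range L with hR
  -- R is closed
  have hRclosed : IsClosed (R : Set H) := by
    rw [← isSeqClosed_iff_isClosed]
    intro zz y0 hz hzy
    choose x hx using hz
    have hcz : CauchySeq zz := hzy.cauchySeq
    have hcx : CauchySeq fun n => ((x n : H)) := by
      rw [Metric.cauchySeq_iff] at hcz ⊢
      intro ε hε
      obtain ⟨N, hN⟩ := hcz ε hε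
      refine ⟨N, fun m hm n hn => ?_⟩
      have := hN m hm n hn
      rw [dist_eq_norm] at this ⊢
      refine lt_of_le_of_lt ?_ this
      have : (x m : H) - (x n : H) = ((x m - x n : S.domain) : H) := rfl
      rw [this, ← hx m, ← hx n, ← _root_.map_sub L]
      exact hnorm1 _
    have hcsx : CauchySeq fun n => ((S (x n) : H)) := by
      rw [Metric.cauchySeq_iff] at hcz ⊢
      intro ε hε
      obtain ⟨N, hN⟩ := hcz ε hε
      refine ⟨N, fun m hm n hn => ?_⟩
      have := hN m hm n hn
      rw [dist_eq_norm] at this ⊢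
      refine lt_of_le_of_lt ?_ this
      have hsub : (S (x m) : H) - (S (x n) : H) = (S (x m - x n) : H) := (map_sub S.toFun _ _).symm
      rw [hsub, ← hx m, ← hx n, ← _root_.map_sub L]
      exact hnorm2 _
    obtain ⟨a, ha⟩ := cauchySeq_tendsto_of_complete hcx
    obtain ⟨w, hw⟩ := cauchySeq_tendsto_of_complete hcsx
    have hmem : (a, w) ∈ (S.graph : Set (H × H)) := by
      have : ∀ n, (((x n : H)), (S (x n) : H)) ∈ (S.graph : Set (H × H)) :=
        fun n => S.mem_graph (x n)
      exact hS_closed.isSeqClosed this (ha.prodMk_nhds hw)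
    rw [SetLike.mem_coe, LinearPMap.mem_graph_iff] at hmem
    obtain ⟨u, hu1, hu2⟩ := hmem
    have hu1' : (u : H) = a := hu1
    have hu2' : (S u : H) = w := hu2
    have hlim : Filter.Tendsto zz Filter.atTop (nhds (w + Complex.I • a)) := by
      have : Filter.Tendsto (fun n => (S (x n) : H) + Complex.I • ((x n : H)))
          Filter.atTop (nhds (w + Complex.I • a)) := hw.add (ha.const_smul Complex.I)
      refine this.congr fun n => ?_
      rw [← hLapp, hx]
    have : y0 = w + Complex.I • a := tendsto_nhds_unique hzy hlim
    refine ⟨u, ?_⟩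
    rw [hLapp, hu1', hu2', this]
  -- Rᗮ = ⊥
  have hRorth : Rᗮ = ⊥ := by
    rw [Submodule.eq_bot_iff]
    intro ξ hξ
    refine defect_eq_zero hsymm hdense2 hess (c := -Complex.I) (by ring_nf; simp) ?_
    intro v
    have hv : (v : H) ∈ S.domain := hTS.1 v.2
    have hTv : T v = S ⟨(v : H), hv⟩ := hTS.2 rfl
    have h0 : ⟪ξ, L ⟨(v : H), hv⟩⟫_ℂ = 0 := by
      rw [Submodule.mem_orthogonal] at hξ
      have := hξ (L ⟨(v : H), hv⟩) (LinearMap.mem_range_self L _)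
      rw [← inner_conj_symm, this]
      simp
    rw [hLapp, inner_add_right, inner_smul_right] at h0
    rw [hTv]
    show ⟪ξ, (S ⟨(v : H), hv⟩ : H)⟫_ℂ = -Complex.I * ⟪ξ, ((⟨(v : H), hv⟩ : S.domain) : H)⟫_ℂ
    linear_combination h0
  have hRtop : R = ⊤ := by
    haveI : CompleteSpace R := hRclosed.completeSpace_coe
    exact Submodule.orthogonal_eq_bot_iff.mp hRorth
  have hy : y ∈ R := hRtop ▸ Submodule.mem_top
  obtain ⟨x, hx⟩ := hy
  exact ⟨x, by rw [← hLapp, hx]⟩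

/-- The closure of a densely defined symmetric operator is symmetric. -/
lemma closure_symm
    (hdense : Dense (T.domain : Set H))
    (hsymm : ∀ x y : T.domain, ⟪T x, (y : H)⟫_ℂ = ⟪(x : H), T y⟫_ℂ) :
    ∀ x v : T.closure.domain, ⟪T.closure x, (v : H)⟫_ℂ = ⟪(x : H), T.closure v⟫_ℂ := by
  set S := T.closure with hS
  have hTclosable : T.IsClosable := isClosable_of_symmetric hdense hsymm
  have hTS : T ≤ S := T.le_closure
  have graphS : (S.graph : Set (H × H)) = _root_.closure (T.graph : Set (H × H)) := by
    rw [← hTclosable.graph_closure_eq_closure_graph]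
    exact (T.graph.topologicalClosure_coe).symm ▸ rfl
  have hS1 : ∀ (x : S.domain) (v : T.domain), ⟪S x, (v : H)⟫_ℂ = ⟪(x : H), T v⟫_ℂ := by
    intro x v
    have hclosed : IsClosed {p : H × H | ⟪p.2, (v : H)⟫_ℂ = ⟪p.1, T v⟫_ℂ} :=
      isClosed_eq (continuous_snd.inner continuous_const) (continuous_fst.inner continuous_const)
    have hsub : (T.graph : Set (H × H)) ⊆ {p : H × H | ⟪p.2, (v : H)⟫_ℂ = ⟪p.1, T v⟫_ℂ} := by
      rintro ⟨a, b⟩ hp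
      rw [SetLike.mem_coe, LinearPMap.mem_graph_iff] at hp
      obtain ⟨u, hu1, hu2⟩ := hp
      have hu1' : (u : H) = a := hu1
      have hu2' : (T u : H) = b := hu2
      show ⟪b, (v : H)⟫_ℂ = ⟪a, T v⟫_ℂ
      rw [← hu1', ← hu2']
      exact hsymm u v
    have hx : ((x : H), S x) ∈ _root_.closure (T.graph : Set (H × H)) := by
      rw [← graphS]; exact S.mem_graph x
    exact closure_minimal hsub hclosed hx
  intro x v
  have hclosed : IsClosed {p : H × H | ⟪(S x : H), p.1⟫_ℂ = ⟪(x : H), p.2⟫_ℂ} :=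
    isClosed_eq (continuous_const.inner continuous_fst) (continuous_const.inner continuous_snd)
  have hsub : (T.graph : Set (H × H)) ⊆ {p : H × H | ⟪(S x : H), p.1⟫_ℂ = ⟪(x : H), p.2⟫_ℂ} := by
    rintro ⟨a, b⟩ hp
    rw [SetLike.mem_coe, LinearPMap.mem_graph_iff] at hp
    obtain ⟨u, hu1, hu2⟩ := hp
    have hu1' : (u : H) = a := hu1
    have hu2' : (T u : H) = b := hu2
    show ⟪(S x : H), a⟫_ℂ = ⟪(x : H), b⟫_ℂ
    rw [← hu1', ← hu2']
    exact hS1 x u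
  have hv : ((v : H), S v) ∈ _root_.closure (T.graph : Set (H × H)) := by
    rw [← graphS]; exact S.mem_graph v
  exact closure_minimal hsub hclosed hv

end Aux

/-- Let `T` be a symmetric operator on a Hilbert space `H` with `dom T²` dense.
If `T²` is essentially self-adjoint on `dom T²`, then `T` is essentially self-adjoint. -/
theorem essSelfAdjoint_of_sq_essSelfAdjoint
    {H : Type*} [NormedAddCommGroup H] [InnerProductSpace ℂ H] [CompleteSpace H]
    (T : H →ₗ.[ℂ] H) (hdense : Dense (T.domain : Set H))
    (hsymm : ∀ x y : T.domain, ⟪T x, (y : H)⟫_ℂ = ⟪(x : H), T y⟫_ℂ)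
    (hdense2 : Dense (((T.pcomp T).domain : Submodule ℂ H) : Set H))
    (hess : IsSelfAdjoint (T.pcomp T).closure) :
    IsSelfAdjoint T.closure := by
  set S := T.closure with hS
  have hTS : T ≤ S := T.le_closure
  have hSdense : Dense ((S.domain : Submodule ℂ H) : Set H) :=
    hdense.mono (by exact_mod_cast hTS.1)
  have hSsymm := closure_symm hdense hsymm
  have hSfa : S.IsFormalAdjoint S := hSsymm
  have hSle : S ≤ S† := hSfa.le_adjoint hSdense
  have hdom : (S†).domain ≤ S.domain := by
    intro ξ hξ
    set z : H := (S†) ⟨ξ, hξ⟩ with hz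
    obtain ⟨x, hx⟩ := surj_add_I hdense hsymm hdense2 hess (z + Complex.I • ξ)
    have hη : ξ - (x : H) = 0 := by
      refine defect_eq_zero hsymm hdense2 hess (c := Complex.I) (by simp [Complex.I_sq]) ?_
      intro v
      have hv : (v : H) ∈ S.domain := hTS.1 v.2
      have hTv : T v = S ⟨(v : H), hv⟩ := hTS.2 rfl
      have h1 : ⟪z, (v : H)⟫_ℂ = ⟪ξ, (S ⟨(v : H), hv⟩ : H)⟫_ℂ :=
        LinearPMap.adjoint_isFormalAdjoint hSdense ⟨ξ, hξ⟩ ⟨(v : H), hv⟩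
      have h2 : ⟪(x : H), (S ⟨(v : H), hv⟩ : H)⟫_ℂ = ⟪(S x : H), (v : H)⟫_ℂ :=
        (hSsymm x ⟨(v : H), hv⟩).symm
      rw [inner_sub_left, inner_sub_left, hTv, ← h1, h2]
      have h3 := congrArg (fun w => ⟪w, (v : H)⟫_ℂ) hx
      simp only [inner_add_left, inner_smul_left, Complex.conj_I] at h3
      linear_combination -h3
    have hxi : ξ = (x : H) := sub_eq_zero.mp hη
    rw [hxi]; exact x.2
  have hfinal : S = S† := LinearPMap.eq_of_le_of_domain_eq hSle (le_antisymm hSle.1 hdom)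
  exact LinearPMap.isSelfAdjoint_def.mpr hfinal.symm
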